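/- Define a relation on pairs (P, r) with P ∈ ℚ[x] (decorated Hilbert polynomial) and r ∈ ℕ_{>0} (rank) by (P₁,r₁) ≼ (P₂,r₂) iff P₁·r₂ ⪯ P₂·r₁ (where ⪯ is eventual comparison of polynomials). Then ≼ restricted to subsheaves (combined with inclusion of sheaves) is a partial order, and any nonempty collection of subsheaves of a Noetherian sheaf has a ≼-maximal element. -/

import Mathlib

/-- Eventual comparison of polynomials: `p ⪯ q` iff `p(m) ≤ q(m)` for all `m ≫ 0`. -/
def polyLE (p q : Polynomial ℚ) : Prop := ∃ m₀ : ℚ, ∀ m ≥ m₀, p.eval m ≤ q.eval m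

/-- The relation `F₁ ≼ F₂ ⟺ F₁ ⊆ F₂ ∧ P_{F₁}·rk F₂ ⪯ P_{F₂}·rk F₁` on subsheaves
(the `P` here being the ε-decorated Hilbert polynomial). -/
def decOrder {R E : Type} [CommRing R] [AddCommGroup E] [Module R E]
    (P : Submodule R E → Polynomial ℚ) (rk : Submodule R E → ℕ)
    (F₁ F₂ : Submodule R E) : Prop :=
  F₁ ≤ F₂ ∧ polyLE ((rk F₂ : ℚ) • P F₁) ((rk F₁ : ℚ) • P F₂)

/-- The relation `≼` on subsheaves (modelled as submodules of a Noetherian module,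
with an abstract decorated Hilbert polynomial `P` and positive rank function `rk`)
is a partial order: reflexive, transitive and antisymmetric; moreover every
nonempty collection of subsheaves has a `≼`-maximal element. -/
theorem stmt_3 {R E : Type} [CommRing R] [AddCommGroup E] [Module R E]
    [IsNoetherian R E]
    (P : Submodule R E → Polynomial ℚ) (rk : Submodule R E → ℕ)
    (hrk : ∀ F : Submodule R E, 0 < rk F) :
    (∀ F : Submodule R E, decOrder P rk F F) ∧
      (∀ F G H : Submodule R E, decOrder P rk F G → decOrder P rk G H → decOrder P rk F H) ∧
      (∀ F G : Submodule R E, decOrder P rk F G → decOrder P rk G F → F = G) ∧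
      (∀ S : Set (Submodule R E), S.Nonempty →
        ∃ F ∈ S, ∀ G ∈ S, decOrder P rk F G → G = F) := by
  refine ⟨fun F => ⟨le_rfl, 0, fun m _ => le_rfl⟩, ?_, ?_, ?_⟩
  · rintro F G H ⟨hFG, m₁, h₁⟩ ⟨hGH, m₂, h₂⟩
    refine ⟨hFG.trans hGH, max m₁ m₂, fun m hm => ?_⟩
    have e1 := h₁ m (le_trans (le_max_left _ _) hm)
    have e2 := h₂ m (le_trans (le_max_right _ _) hm)
    simp only [Polynomial.eval_smul, smul_eq_mul] at *
    have hF : (0:ℚ) < rk F := by exact_mod_cast hrk F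
    have hG : (0:ℚ) < rk G := by exact_mod_cast hrk G
    have hH : (0:ℚ) < rk H := by exact_mod_cast hrk H
    nlinarith [mul_le_mul_of_nonneg_left e1 hH.le, mul_le_mul_of_nonneg_left e2 hF.le]
  · exact fun F G h₁ h₂ => le_antisymm h₁.1 h₂.1
  · intro S hS
    obtain ⟨F, hFS, hmax⟩ := set_has_maximal_iff_noetherian.mpr ‹_› S hS
    exact ⟨F, hFS, fun G hG h => le_antisymm (by_contra fun hc => hmax G hG (lt_of_le_not_ge h.1 hc)) h.1⟩
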